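/- If the transition matrix of a Markov chain on a connected weighted undirected graph G is T = I - τ·L̃ with 0 < τ ≤ (max_i Σ_j w_ij)^{-1}, then the commute time matrix C satisfies C = (n/τ)·Ω, where Ω is the matrix of effective resistances of G. -/

import Mathlib

open Finset Relation Matrix
open scoped Classical

/-- `T` is a (row-)stochastic matrix. -/
def IsStochastic {n : ℕ} (T : Matrix (Fin n) (Fin n) ℝ) : Prop :=
  (∀ i j, 0 ≤ T i j) ∧ ∀ i, ∑ j, T i j = 1

/-- Irreducibility of a Markov chain: every state leads to every state. -/
def IsIrreducibleMC {n : ℕ} (T : Matrix (Fin n) (Fin n) ℝ) : Prop :=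
  ∀ i j, Relation.TransGen (fun a b => 0 < T a b) i j

/-- `pi` is the stationary distribution of `T`. -/
def IsStationaryDist {n : ℕ} (T : Matrix (Fin n) (Fin n) ℝ) (pi : Fin n → ℝ) : Prop :=
  (∀ i, 0 ≤ pi i) ∧ (∑ i, pi i) = 1 ∧ ∀ j, ∑ i, pi i * T i j = pi j

/-- The step relation of a set `A` of arcs. -/
def arcStep {n : ℕ} (A : Finset (Fin n × Fin n)) (x y : Fin n) : Prop := (x, y) ∈ A

/-- `A` is an in-forest: no loops, out-degree at most one, and no directed cycles;
equivalently, every weak component is a converging tree. -/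
def IsInForest {n : ℕ} (A : Finset (Fin n × Fin n)) : Prop :=
  (∀ a ∈ A, a.1 ≠ a.2) ∧
  (∀ v : Fin n, (A.filter fun a => a.1 = v).card ≤ 1) ∧
  ∀ v : Fin n, ¬ Relation.TransGen (arcStep A) v v

/-- `j` is a root (no outgoing arc) of the arc set `A`. -/
def IsRootOf {n : ℕ} (A : Finset (Fin n × Fin n)) (j : Fin n) : Prop := ∀ a ∈ A, a.1 ≠ j

/-- In the in-forest `A`, vertex `i` belongs to the tree converging to the root `j`. -/
def InTreeOf {n : ℕ} (A : Finset (Fin n × Fin n)) (i j : Fin n) : Prop :=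
  IsRootOf A j ∧ Relation.ReflTransGen (arcStep A) i j

/-- The weight of an arc set: the product of its arc weights. -/
noncomputable def digraphWeight {n : ℕ} (W : Matrix (Fin n) (Fin n) ℝ)
    (A : Finset (Fin n × Fin n)) : ℝ :=
  ∏ a ∈ A, W a.1 a.2

/-- Total weight of the in-forests satisfying the predicate `P`. -/
noncomputable def forestWeight {n : ℕ} (W : Matrix (Fin n) (Fin n) ℝ)
    (P : Finset (Fin n × Fin n) → Prop) : ℝ :=
  ∑ A : Finset (Fin n × Fin n), if IsInForest A ∧ P A then digraphWeight W A else 0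

/-- `σ_k`: total weight of in-forests with `k` arcs. -/
noncomputable def sigmaF {n : ℕ} (W : Matrix (Fin n) (Fin n) ℝ) (k : ℕ) : ℝ :=
  forestWeight W fun A => A.card = k

/-- `q^(k)_{ij}`: total weight of in-forests with `k` arcs in which vertex `i`
belongs to the tree converging to `j`. -/
noncomputable def qF {n : ℕ} (W : Matrix (Fin n) (Fin n) ℝ) (k : ℕ) (i j : Fin n) : ℝ :=
  forestWeight W fun A => A.card = k ∧ InTreeOf A i j

/-- `q_j`: total weight of spanning trees converging to `j`. -/
noncomputable def treeW {n : ℕ} (W : Matrix (Fin n) (Fin n) ℝ) (j : Fin n) : ℝ :=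
  qF W (n - 1) j j

/-- `f_{ij}`: total weight of 2-tree in-forests having one tree containing `i`
and the other tree converging to `j`. -/
noncomputable def fF {n : ℕ} (W : Matrix (Fin n) (Fin n) ℝ) (i j : Fin n) : ℝ :=
  forestWeight W fun A =>
    A.card = n - 2 ∧ IsRootOf A j ∧ ¬ Relation.ReflTransGen (arcStep A) i j

/-- `X` is the group inverse of `L`. -/
def IsGroupInverse {n : ℕ} (L X : Matrix (Fin n) (Fin n) ℝ) : Prop :=
  L * X * L = L ∧ X * L * X = X ∧ L * X = X * L

/-- `M` is the matrix of mean first passage times (with `M j j` the mean return time):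
the standard first-step equations. -/
def IsMFPTMatrix {n : ℕ} (T M : Matrix (Fin n) (Fin n) ℝ) : Prop :=
  ∀ i j, M i j = 1 + ∑ k ∈ Finset.univ.filter (fun k => k ≠ j), T i k * M k j

/-- `m` is the hitting-time function with `m i i = 0`. -/
def IsHittingTime {n : ℕ} (T : Matrix (Fin n) (Fin n) ℝ) (m : Fin n → Fin n → ℝ) : Prop :=
  (∀ i, m i i = 0) ∧ ∀ i j, i ≠ j → m i j = 1 + ∑ k, T i k * m k j

/-- The Laplacian matrix of the weight matrix `W`. -/
noncomputable def lap {n : ℕ} (W : Matrix (Fin n) (Fin n) ℝ) : Matrix (Fin n) (Fin n) ℝ :=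
  Matrix.diagonal (fun i => ∑ j, W i j) - W

/-- The (undirected) step relation of a canonically oriented edge set. -/
def edgeStep {n : ℕ} (A : Finset (Fin n × Fin n)) (x y : Fin n) : Prop :=
  (x, y) ∈ A ∨ (y, x) ∈ A

/-- Every pair in `A` is canonically oriented, so `A` encodes a set of undirected edges. -/
def IsEdgeSet {n : ℕ} (A : Finset (Fin n × Fin n)) : Prop := ∀ a ∈ A, a.1 < a.2

/-- `A` is a spanning tree of the undirected graph on `Fin n`:
`n - 1` edges and connected. -/
def IsSpanningTreeU {n : ℕ} (A : Finset (Fin n × Fin n)) : Prop :=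
  IsEdgeSet A ∧ A.card = n - 1 ∧ ∀ u v : Fin n, Relation.ReflTransGen (edgeStep A) u v

/-- `A` is a 2-tree spanning forest of the undirected graph on `Fin n`
having `i` and `j` in different trees. -/
def IsTwoForestSep {n : ℕ} (A : Finset (Fin n × Fin n)) (i j : Fin n) : Prop :=
  IsEdgeSet A ∧ A.card = n - 2 ∧ ¬ Relation.ReflTransGen (edgeStep A) i j ∧
    ∀ v : Fin n, Relation.ReflTransGen (edgeStep A) v i ∨ Relation.ReflTransGen (edgeStep A) v j

/-- Total weight of the edge sets satisfying `P` (weights of forests are products of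
edge weights; weights of sets of forests are sums). -/
noncomputable def uWeightSum {n : ℕ} (W : Matrix (Fin n) (Fin n) ℝ)
    (P : Finset (Fin n × Fin n) → Prop) : ℝ :=
  ∑ A : Finset (Fin n × Fin n), if P A then digraphWeight W A else 0

/-- The weighted undirected graph with weight matrix `W` is connected. -/
def IsConnectedW {n : ℕ} (W : Matrix (Fin n) (Fin n) ℝ) : Prop :=
  ∀ i j : Fin n, Relation.ReflTransGen (fun a b => 0 < W a b) i j

section stmt8aux

variable {n : ℕ}

lemma lap_apply (W : Matrix (Fin n) (Fin n) ℝ) (i j : Fin n) :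
    lap W i j = (if i = j then ∑ k, W i k else 0) - W i j := by
  simp [lap, Matrix.sub_apply, Matrix.diagonal_apply]

lemma lap_rowsum (W : Matrix (Fin n) (Fin n) ℝ) (i : Fin n) :
    ∑ j, lap W i j = 0 := by
  simp [lap_apply, Finset.sum_sub_distrib]

lemma lap_symm (W : Matrix (Fin n) (Fin n) ℝ) (hsym : ∀ i j, W i j = W j i)
    (i j : Fin n) : lap W i j = lap W j i := by
  rcases eq_or_ne i j with rfl | h
  · rfl
  · simp [lap_apply, h, h.symm, hsym i j]

lemma lap_colsum (W : Matrix (Fin n) (Fin n) ℝ) (hsym : ∀ i j, W i j = W j i)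
    (j : Fin n) : ∑ i, lap W i j = 0 := by
  rw [Finset.sum_congr rfl fun i _ => lap_symm W hsym i j]
  -- now ∑ i, lap W j i = 0
  exact lap_rowsum W j

lemma kernel_const (W : Matrix (Fin n) (Fin n) ℝ)
    (hsym : ∀ i j, W i j = W j i) (hnn : ∀ i j, 0 ≤ W i j)
    (v : Fin n → ℝ) (hv : ∀ i, ∑ j, lap W i j * v j = 0) :
    ∀ a b, Relation.ReflTransGen (fun a b => 0 < W a b) a b → v a = v b := by
  have hrow : ∀ i, ∑ j, W i j * (v i - v j) = ∑ j, lap W i j * v j := by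
    intro i
    simp only [lap_apply, sub_mul, mul_sub, Finset.sum_sub_distrib, ite_mul, zero_mul]
    congr 1
    · rw [Finset.sum_ite_eq Finset.univ i (fun j => (∑ k, W i k) * v j)]
      simp [Finset.sum_mul]
  have hz : ∀ i, ∑ j, W i j * (v i - v j) * v i = 0 := by
    intro i
    have : ∑ j, W i j * (v i - v j) * v i = (∑ j, W i j * (v i - v j)) * v i := by
      rw [Finset.sum_mul]
    rw [this, hrow i, hv i, zero_mul]
  have swap : ∑ i, ∑ j, W i j * (v i - v j) * v j
      = ∑ i, ∑ j, W i j * (v j - v i) * v i := by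
    rw [Finset.sum_comm]
    exact Finset.sum_congr rfl fun i _ => Finset.sum_congr rfl fun j _ => by rw [hsym j i]
  have key : ∑ i, ∑ j, W i j * (v i - v j)^2 = 0 := by
    have expand : ∑ i, ∑ j, W i j * (v i - v j)^2
        = ∑ i, ∑ j, (W i j * (v i - v j) * v i - W i j * (v i - v j) * v j) :=
      Finset.sum_congr rfl fun i _ => Finset.sum_congr rfl fun j _ => by ring
    rw [expand]
    simp only [Finset.sum_sub_distrib]
    rw [Finset.sum_congr rfl fun i (_ : i ∈ Finset.univ) => hz i]
    have : ∑ i, ∑ j, W i j * (v i - v j) * v j = 0 := by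
      rw [swap]
      have : ∀ i : Fin n, ∑ j, W i j * (v j - v i) * v i = - ∑ j, W i j * (v i - v j) * v i := by
        intro i
        rw [← Finset.sum_neg_distrib]
        exact Finset.sum_congr rfl fun j _ => by ring
      rw [Finset.sum_congr rfl fun i (_ : i ∈ Finset.univ) => this i]
      simp [hz]
    rw [this]
    simp
  have hpt : ∀ a b, 0 < W a b → v a = v b := by
    intro a b hab
    have houter : ∀ i ∈ Finset.univ, (0:ℝ) ≤ ∑ j, W i j * (v i - v j)^2 := by
      intro i _
      exact Finset.sum_nonneg fun j _ => mul_nonneg (hnn i j) (sq_nonneg _)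
    have hinner := (Finset.sum_eq_zero_iff_of_nonneg houter).mp key a (Finset.mem_univ a)
    have hterm := (Finset.sum_eq_zero_iff_of_nonneg
      (fun j _ => mul_nonneg (hnn a j) (sq_nonneg (v a - v j)))).mp hinner b (Finset.mem_univ b)
    have : (v a - v b)^2 = 0 := by
      rcases mul_eq_zero.mp hterm with h | h
      · exact absurd h (ne_of_gt hab)
      · exact h
    have := pow_eq_zero_iff (n := 2) (by norm_num) |>.mp this
    linarith [sub_eq_zero.mp this]
  intro a b h
  induction h with
  | refl => rfl
  | tail _ hstep ih => exact ih.trans (hpt _ _ hstep)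

lemma max_principle (W T : Matrix (Fin n) (Fin n) ℝ)
    (hconn : ∀ i j : Fin n, Relation.ReflTransGen (fun a b => 0 < W a b) i j)
    (hW0 : ∀ i, W i i = 0)
    (hTnn : ∀ i k, 0 ≤ T i k) (hTrow : ∀ i, ∑ k, T i k = 1)
    (hTpos : ∀ a b, a ≠ b → 0 < W a b → 0 < T a b)
    (v : Fin n → ℝ) (j : Fin n) (hvj : v j = 0)
    (heq : ∀ i, i ≠ j → v i = ∑ k, T i k * v k) :
    ∀ i, v i ≤ 0 := by
  have hne : (Finset.univ : Finset (Fin n)).Nonempty := ⟨j, Finset.mem_univ j⟩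
  set M := Finset.univ.sup' hne v with hM
  have hle : ∀ k, v k ≤ M := fun k => Finset.le_sup' v (Finset.mem_univ k)
  have prop : ∀ a, Relation.ReflTransGen (fun x y => 0 < W x y) a j → v a = M → v j = M := by
    intro a h
    induction h using Relation.ReflTransGen.head_induction_on with
    | refl => exact fun h => h
    | @head a c hstep htail ih =>
      intro ha
      by_cases haj : a = j
      · exact haj ▸ ha
      · apply ih
        have hsum : ∑ k, T a k * (M - v k) = 0 := by
          have h1 : ∑ k, T a k * (M - v k) = (∑ k, T a k) * M - ∑ k, T a k * v k := by
            simp [mul_sub, Finset.sum_sub_distrib, Finset.sum_mul]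
          rw [h1, hTrow a, one_mul, ← heq a haj, ha, sub_self]
        have each := (Finset.sum_eq_zero_iff_of_nonneg
          (fun k _ => mul_nonneg (hTnn a k) (by linarith [hle k]))).mp hsum c (Finset.mem_univ c)
        have hac : a ≠ c := by
          rintro rfl
          rw [hW0 a] at hstep
          exact lt_irrefl 0 hstep
        rcases mul_eq_zero.mp each with h | h
        · exact absurd h (ne_of_gt (hTpos a c hac hstep))
        · linarith
  obtain ⟨k0, _, hk0⟩ := Finset.exists_mem_eq_sup' hne v
  have hMj : v j = M := prop k0 (hconn k0 j) hk0.symm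
  intro i
  calc v i ≤ M := hle i
  _ = 0 := by rw [← hMj, hvj]

lemma LY_entry (hn : 0 < n) (W Y : Matrix (Fin n) (Fin n) ℝ)
    (hsym : ∀ i j, W i j = W j i) (hnn : ∀ i j, 0 ≤ W i j)
    (hconn : IsConnectedW W) (hY : IsGroupInverse (lap W) Y) (i j : Fin n) :
    (lap W * Y) i j = (if i = j then 1 else 0) - 1/(n:ℝ) := by
  obtain ⟨h1, h2, h3⟩ := hY
  set L := lap W with hL
  set K := (1 : Matrix (Fin n) (Fin n) ℝ) - L * Y with hK
  have hLK : L * K = 0 := by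
    have h4 : L * (L * Y) = L := by rw [h3, ← mul_assoc, h1]
    rw [hK, mul_sub, mul_one, h4, sub_self]
  have hcol : ∀ (jj : Fin n) (a b : Fin n), K a jj = K b jj := by
    intro jj a b
    refine kernel_const W hsym hnn (fun x => K x jj) ?_ a b (hconn a b)
    intro i'
    have := congrFun (congrFun hLK i') jj
    simpa [Matrix.mul_apply] using this
  have hcolsum : ∀ jj : Fin n, ∑ x, K x jj = 1 := by
    intro jj
    have hLsum : ∑ x, (L * Y) x jj = 0 := by
      simp only [Matrix.mul_apply]
      rw [Finset.sum_comm]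
      apply Finset.sum_eq_zero
      intro k _
      rw [← Finset.sum_mul, hL, lap_colsum W hsym k, zero_mul]
    simp [hK, Matrix.sub_apply, Matrix.one_apply, Finset.sum_sub_distrib, hLsum]
  have hKval : K i j = 1 / (n:ℝ) := by
    have h' := hcolsum j
    rw [Finset.sum_congr rfl fun x (_ : x ∈ Finset.univ) => hcol j x i] at h'
    rw [Finset.sum_const, Finset.card_univ, Fintype.card_fin, nsmul_eq_mul] at h'
    have hn' : (n:ℝ) ≠ 0 := Nat.cast_ne_zero.mpr hn.ne'
    field_simp
    linarith [h']
  have hKij : K i j = (if i = j then 1 else 0) - (L * Y) i j := by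
    rw [hK]
    simp [Matrix.sub_apply, Matrix.one_apply]
  rw [hKij] at hKval
  linarith [hKval]


end stmt8aux

/-- for the chain with transition matrix `T = I - τ·L̃`,
`0 < τ ≤ (max_i Σ_j w_ij)⁻¹`, the commute times satisfy `C = (n/τ)·Ω`. -/
theorem stmt8 {n : ℕ} (hn : 0 < n) (W : Matrix (Fin n) (Fin n) ℝ)
    (hsym : ∀ i j, W i j = W j i) (hnn : ∀ i j, 0 ≤ W i j) (h0 : ∀ i, W i i = 0)
    (hconn : IsConnectedW W)
    (tau : ℝ) (htau0 : 0 < tau)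
    (htau1 : tau ≤ (Finset.univ.sup' (Finset.univ_nonempty_iff.mpr ⟨⟨0, hn⟩⟩)
      (fun i => ∑ j, W i j))⁻¹)
    (m : Fin n → Fin n → ℝ) (hm : IsHittingTime (1 - tau • lap W) m)
    (Y : Matrix (Fin n) (Fin n) ℝ) (hY : IsGroupInverse (lap W) Y) :
    ∀ i j, m i j + m j i = ((n : ℝ) / tau) * (Y i i + Y j j - Y i j - Y j i) := by
  have hn' : (n:ℝ) ≠ 0 := Nat.cast_ne_zero.mpr hn.ne'
  set T : Matrix (Fin n) (Fin n) ℝ := 1 - tau • lap W with hTdef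
  have hT : ∀ i k, T i k = (if i = k then (1:ℝ) else 0) - tau * lap W i k := by
    intro i k
    simp [hTdef, Matrix.sub_apply, Matrix.one_apply, Matrix.smul_apply, smul_eq_mul]
  have hTrow : ∀ i, ∑ k, T i k = 1 := by
    intro i
    simp only [hT, Finset.sum_sub_distrib, Finset.sum_ite_eq, Finset.mem_univ, if_true,
      ← Finset.mul_sum, lap_rowsum, mul_zero, sub_zero]
  have hdiag : ∀ i, tau * (∑ j, W i j) ≤ 1 := by
    intro i
    set S := (Finset.univ.sup' (Finset.univ_nonempty_iff.mpr ⟨⟨0, hn⟩⟩)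
      (fun i : Fin n => ∑ j, W i j)) with hS
    have hiS : ∑ j, W i j ≤ S :=
      Finset.le_sup' (fun i : Fin n => ∑ j, W i j) (Finset.mem_univ i)
    have hrow0 : 0 ≤ ∑ j, W i j := Finset.sum_nonneg fun j _ => hnn i j
    rcases le_or_gt S 0 with h | h
    · have : ∑ j, W i j = 0 := le_antisymm (hiS.trans h) hrow0
      rw [this, mul_zero]; norm_num
    · have h1 : tau * S ≤ 1 := by
        have := mul_le_mul_of_nonneg_right htau1 h.le
        rwa [inv_mul_cancel₀ h.ne'] at this
      nlinarith
  have hTnn : ∀ i k, 0 ≤ T i k := by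
    intro i k
    rw [hT, lap_apply]
    rcases eq_or_ne i k with rfl | h
    · simp only [if_true]
      have := hdiag i
      rw [h0 i]
      nlinarith
    · simp only [if_neg h]
      nlinarith [hnn i k, htau0.le]
  have hTpos : ∀ a b, a ≠ b → 0 < W a b → 0 < T a b := by
    intro a b hab hW
    rw [hT, lap_apply, if_neg hab, if_neg hab]
    nlinarith
  have hLY : ∀ i j, (lap W * Y) i j = (if i = j then 1 else 0) - 1/(n:ℝ) :=
    LY_entry hn W Y hsym hnn hconn hY
  -- the candidate solution satisfies the hitting-time equations
  have hTY : ∀ i jj, i ≠ jj → ∑ k, T i k * Y k jj = Y i jj + tau / n := by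
    intro i jj hij
    have h2 : ∑ k, tau * lap W i k * Y k jj = tau * ((lap W * Y) i jj) := by
      rw [Matrix.mul_apply, Finset.mul_sum]
      exact Finset.sum_congr rfl fun k _ => by ring
    simp only [hT, sub_mul, ite_mul, zero_mul, Finset.sum_sub_distrib, one_mul,
      Finset.sum_ite_eq, Finset.mem_univ, if_true, h2, hLY i jj, if_neg hij]
    ring
  have hm'eq : ∀ i jj, i ≠ jj → ((n:ℝ)/tau) * (Y jj jj - Y i jj)
      = 1 + ∑ k, T i k * (((n:ℝ)/tau) * (Y jj jj - Y k jj)) := by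
    intro i jj hij
    have hexp : ∑ k, T i k * (((n:ℝ)/tau) * (Y jj jj - Y k jj))
        = ((n:ℝ)/tau) * Y jj jj * (∑ k, T i k) - ((n:ℝ)/tau) * ∑ k, T i k * Y k jj := by
      calc ∑ k, T i k * (((n:ℝ)/tau) * (Y jj jj - Y k jj))
          = ∑ k, (((n:ℝ)/tau) * Y jj jj * T i k - ((n:ℝ)/tau) * (T i k * Y k jj)) :=
            Finset.sum_congr rfl fun k _ => by ring
        _ = (∑ k, ((n:ℝ)/tau) * Y jj jj * T i k) - ∑ k, ((n:ℝ)/tau) * (T i k * Y k jj) :=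
            Finset.sum_sub_distrib _ _
        _ = ((n:ℝ)/tau) * Y jj jj * (∑ k, T i k) - ((n:ℝ)/tau) * ∑ k, T i k * Y k jj := by
            rw [← Finset.mul_sum, ← Finset.mul_sum]
    rw [hexp, hTrow i, hTY i jj hij, mul_one]
    field_simp
    ring
  -- uniqueness
  have huniq : ∀ (jj : Fin n) (i : Fin n), m i jj = ((n:ℝ)/tau) * (Y jj jj - Y i jj) := by
    intro jj
    set v : Fin n → ℝ := fun i => m i jj - ((n:ℝ)/tau) * (Y jj jj - Y i jj) with hv
    have hvjj : v jj = 0 := by simp [hv, hm.1 jj]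
    have hveq : ∀ i, i ≠ jj → v i = ∑ k, T i k * v k := by
      intro i hij
      have e1 := hm.2 i jj hij
      have e2 := hm'eq i jj hij
      show m i jj - ((n:ℝ)/tau) * (Y jj jj - Y i jj)
          = ∑ k, T i k * (m k jj - ((n:ℝ)/tau) * (Y jj jj - Y k jj))
      calc m i jj - ((n:ℝ)/tau) * (Y jj jj - Y i jj)
          = (1 + ∑ k, T i k * m k jj) - (1 + ∑ k, T i k * (((n:ℝ)/tau) * (Y jj jj - Y k jj))) := by
            rw [← e1, ← e2]
        _ = ∑ k, (T i k * m k jj - T i k * (((n:ℝ)/tau) * (Y jj jj - Y k jj))) := by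
            rw [Finset.sum_sub_distrib]; ring
        _ = ∑ k, T i k * (m k jj - ((n:ℝ)/tau) * (Y jj jj - Y k jj)) :=
            Finset.sum_congr rfl fun k _ => by ring
    have h1 := max_principle W T hconn h0 hTnn hTrow hTpos v jj hvjj hveq
    have h2 := max_principle W T hconn h0 hTnn hTrow hTpos (fun i => -v i) jj
      (by simp [hvjj])
      (by
        intro i hij
        show -v i = ∑ k, T i k * (-v k)
        rw [hveq i hij, ← Finset.sum_neg_distrib]
        exact Finset.sum_congr rfl fun k _ => by ring)
    intro i
    have hv0 : v i = 0 := le_antisymm (h1 i) (by simpa using h2 i)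
    have : m i jj - ((n:ℝ)/tau) * (Y jj jj - Y i jj) = 0 := hv0
    linarith
  intro i j
  rw [huniq j i, huniq i j]
  ring
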